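/- The gluing composition of two iposets is associative up to isomorphism: for iposets P : n → m, Q : m → k, R : k → l, we have (P * Q) * R ≅ P * (Q * R). -/

import Mathlib

/-- Interval order condition for a strict order relation. -/
def IsIntervalOrderRel {α : Type} (lt : α → α → Prop) : Prop :=
  ∀ w x y z, lt w y → lt x z → lt w z ∨ lt x y

/-- Serial composition (ordinal sum) of two strict orders. -/
def serialLt {α β : Type} (r : α → α → Prop) (s : β → β → Prop) :
    α ⊕ β → α ⊕ β → Prop
  | .inl a, .inl b => r a b
  | .inr a, .inr b => s a b
  | .inl _, .inr _ => True
  | .inr _, .inl _ => False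

/-- Parallel composition (disjoint union) of two strict orders. -/
def parallelLt {α β : Type} (r : α → α → Prop) (s : β → β → Prop) :
    α ⊕ β → α ⊕ β → Prop
  | .inl a, .inl b => r a b
  | .inr a, .inr b => s a b
  | _, _ => False

/-- A poset with interfaces: a finite strict poset with injective interface
maps from the discrete posets `[n]` (onto minimal elements) and `[m]` (onto
maximal elements). -/
structure Iposet (n m : ℕ) where
  carrier : Type
  fin : Finite carrier
  lt : carrier → carrier → Prop
  irrefl : ∀ x, ¬ lt x x
  trans : ∀ x y z, lt x y → lt y z → lt x z
  s : Fin n → carrier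
  t : Fin m → carrier
  s_inj : Function.Injective s
  t_inj : Function.Injective t
  s_min : ∀ i x, ¬ lt x (s i)
  t_max : ∀ i x, ¬ lt (t i) x

namespace Iposet

/-- Parallel composition of iposets. -/
def par {n₁ m₁ n₂ m₂ : ℕ} (P : Iposet n₁ m₁) (Q : Iposet n₂ m₂) :
    Iposet (n₁ + n₂) (m₁ + m₂) where
  carrier := P.carrier ⊕ Q.carrier
  fin := by have := P.fin; have := Q.fin; exact inferInstance
  lt a b := match a, b with
    | .inl x, .inl y => P.lt x y
    | .inr x, .inr y => Q.lt x y
    | _, _ => False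
  irrefl := by
    rintro (x | x) h
    · exact P.irrefl x h
    · exact Q.irrefl x h
  trans := by
    rintro (x | x) (y | y) (z | z) h1 h2 <;>
      first
        | exact P.trans _ _ _ h1 h2
        | exact Q.trans _ _ _ h1 h2
        | exact h1.elim
        | exact h2.elim
  s := fun i =>
    if h : (i : ℕ) < n₁ then .inl (P.s ⟨i, h⟩)
    else .inr (Q.s ⟨(i : ℕ) - n₁, by have := i.isLt; omega⟩)
  t := fun i =>
    if h : (i : ℕ) < m₁ then .inl (P.t ⟨i, h⟩)
    else .inr (Q.t ⟨(i : ℕ) - m₁, by have := i.isLt; omega⟩)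
  s_inj := by
    intro i j h
    rcases Nat.lt_or_ge (i : ℕ) n₁ with hi | hi <;>
      rcases Nat.lt_or_ge (j : ℕ) n₁ with hj | hj
    · simp only [dif_pos hi, dif_pos hj] at h
      have h2 := P.s_inj (Sum.inl.inj h)
      simp only [Fin.mk.injEq] at h2
      exact Fin.ext h2
    · simp only [dif_pos hi, dif_neg (Nat.not_lt.mpr hj)] at h
      exact absurd h (by simp)
    · simp only [dif_neg (Nat.not_lt.mpr hi), dif_pos hj] at h
      exact absurd h (by simp)
    · simp only [dif_neg (Nat.not_lt.mpr hi), dif_neg (Nat.not_lt.mpr hj)] at h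
      have h2 := Q.s_inj (Sum.inr.inj h)
      simp only [Fin.mk.injEq] at h2
      exact Fin.ext (by omega)
  t_inj := by
    intro i j h
    rcases Nat.lt_or_ge (i : ℕ) m₁ with hi | hi <;>
      rcases Nat.lt_or_ge (j : ℕ) m₁ with hj | hj
    · simp only [dif_pos hi, dif_pos hj] at h
      have h2 := P.t_inj (Sum.inl.inj h)
      simp only [Fin.mk.injEq] at h2
      exact Fin.ext h2
    · simp only [dif_pos hi, dif_neg (Nat.not_lt.mpr hj)] at h
      exact absurd h (by simp)
    · simp only [dif_neg (Nat.not_lt.mpr hi), dif_pos hj] at h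
      exact absurd h (by simp)
    · simp only [dif_neg (Nat.not_lt.mpr hi), dif_neg (Nat.not_lt.mpr hj)] at h
      have h2 := Q.t_inj (Sum.inr.inj h)
      simp only [Fin.mk.injEq] at h2
      exact Fin.ext (by omega)
  s_min := by
    intro i a
    rcases Nat.lt_or_ge (i : ℕ) n₁ with hi | hi
    · simp only [dif_pos hi]
      rcases a with x | x
      · exact P.s_min _ x
      · exact fun h => h
    · simp only [dif_neg (Nat.not_lt.mpr hi)]
      rcases a with x | x
      · exact fun h => h
      · exact Q.s_min _ x
  t_max := by
    intro i a
    rcases Nat.lt_or_ge (i : ℕ) m₁ with hi | hi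
    · simp only [dif_pos hi]
      rcases a with x | x
      · exact P.t_max _ x
      · exact fun h => h
    · simp only [dif_neg (Nat.not_lt.mpr hi)]
      rcases a with x | x
      · exact fun h => h
      · exact Q.t_max _ x

open Classical in
/-- Gluing composition of iposets: targets of `P` are identified with sources
of `Q`, and every non-target point of `P` is ordered below every non-source
point of `Q`. -/
noncomputable def glue {n m k : ℕ} (P : Iposet n m) (Q : Iposet m k) :
    Iposet n k where
  carrier := P.carrier ⊕ {q : Q.carrier // ¬ ∃ j, Q.s j = q}
  fin := by have := P.fin; have := Q.fin; exact inferInstance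
  lt a b := match a, b with
    | .inl x, .inl y => P.lt x y
    | .inl x, .inr q => (¬ ∃ i, P.t i = x) ∨ (∃ i, P.t i = x ∧ Q.lt (Q.s i) q.val)
    | .inr p, .inr q => Q.lt p.val q.val
    | .inr _, .inl _ => False
  irrefl := by
    rintro (x | q) h
    · exact P.irrefl x h
    · exact Q.irrefl q.val h
  trans := by
    rintro (x | x) (y | y) (z | z) h1 h2
    · exact P.trans _ _ _ h1 h2
    · left; rintro ⟨j, rfl⟩; exact P.t_max j y h1
    · exact h2.elim
    · rcases h1 with h1 | ⟨i, hi, hlt⟩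
      · exact Or.inl h1
      · exact Or.inr ⟨i, hi, Q.trans _ _ _ hlt h2⟩
    · exact h1.elim
    · exact h1.elim
    · exact h2.elim
    · exact Q.trans _ _ _ h1 h2
  s := fun i => .inl (P.s i)
  t := fun i =>
    if h : ∃ j, Q.s j = Q.t i then .inl (P.t h.choose) else .inr ⟨Q.t i, h⟩
  s_inj := fun i j h => P.s_inj (Sum.inl.inj h)
  t_inj := by
    intro i j h
    by_cases hi : ∃ a, Q.s a = Q.t i <;> by_cases hj : ∃ a, Q.s a = Q.t j
    · simp only [dif_pos hi, dif_pos hj] at h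
      have h2 := P.t_inj (Sum.inl.inj h)
      apply Q.t_inj
      rw [← hi.choose_spec, ← hj.choose_spec, h2]
    · simp only [dif_pos hi, dif_neg hj] at h
      exact absurd h (by simp)
    · simp only [dif_neg hi, dif_pos hj] at h
      exact absurd h (by simp)
    · simp only [dif_neg hi, dif_neg hj, Sum.inr.injEq, Subtype.mk.injEq] at h
      exact Q.t_inj h
  s_min := by
    rintro i (x | q) h
    · exact P.s_min i x h
    · exact h
  t_max := by
    intro i a
    by_cases hi : ∃ j, Q.s j = Q.t i
    · simp only [dif_pos hi]
      rcases a with x | q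
      · exact P.t_max _ x
      · rintro (h | ⟨i', hi', hlt⟩)
        · exact h ⟨hi.choose, rfl⟩
        · have he : i' = hi.choose := P.t_inj hi'
          subst he
          rw [hi.choose_spec] at hlt
          exact Q.t_max i q.val hlt
    · simp only [dif_neg hi]
      rcases a with x | q
      · exact fun h => h
      · exact fun h => Q.t_max i q.val h

/-- The empty iposet. -/
def ipoEmpty : Iposet 0 0 where
  carrier := PEmpty
  fin := inferInstance
  lt _ _ := False
  irrefl _ h := h
  trans := by intro x; exact x.elim
  s := Fin.elim0
  t := Fin.elim0
  s_inj := by intro i; exact i.elim0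
  t_inj := by intro i; exact i.elim0
  s_min := fun i => i.elim0
  t_max := fun i => i.elim0

/-- The singleton iposet with empty source and empty target interface. -/
def ipo00 : Iposet 0 0 where
  carrier := PUnit
  fin := inferInstance
  lt _ _ := False
  irrefl _ h := h
  trans := by intro _ _ _ h; exact h.elim
  s := Fin.elim0
  t := Fin.elim0
  s_inj := by intro i; exact i.elim0
  t_inj := by intro i; exact i.elim0
  s_min := fun i => i.elim0
  t_max := fun i => i.elim0

/-- The singleton iposet with empty source and full target interface. -/
def ipo01 : Iposet 0 1 where
  carrier := PUnit
  fin := inferInstance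
  lt _ _ := False
  irrefl _ h := h
  trans := by intro _ _ _ h; exact h.elim
  s := Fin.elim0
  t := fun _ => PUnit.unit
  s_inj := by intro i; exact i.elim0
  t_inj := by intro i j _; exact Subsingleton.elim i j
  s_min := fun i => i.elim0
  t_max := fun _ _ h => h

/-- The singleton iposet with full source and empty target interface. -/
def ipo10 : Iposet 1 0 where
  carrier := PUnit
  fin := inferInstance
  lt _ _ := False
  irrefl _ h := h
  trans := by intro _ _ _ h; exact h.elim
  s := fun _ => PUnit.unit
  t := Fin.elim0
  s_inj := by intro i j _; exact Subsingleton.elim i j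
  t_inj := by intro i; exact i.elim0
  s_min := fun _ _ h => h
  t_max := fun i => i.elim0

/-- The singleton iposet with full source and full target interface. -/
def ipo11 : Iposet 1 1 where
  carrier := PUnit
  fin := inferInstance
  lt _ _ := False
  irrefl _ h := h
  trans := by intro _ _ _ h; exact h.elim
  s := fun _ => PUnit.unit
  t := fun _ => PUnit.unit
  s_inj := by intro i j _; exact Subsingleton.elim i j
  t_inj := by intro i j _; exact Subsingleton.elim i j
  s_min := fun _ _ h => h
  t_max := fun _ _ h => h

/-- The identity iposet `n → n`: the discrete poset on `n` points with both
interface maps the identity. -/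
def ipoId (n : ℕ) : Iposet n n where
  carrier := Fin n
  fin := inferInstance
  lt _ _ := False
  irrefl _ h := h
  trans := by intro _ _ _ h; exact h.elim
  s := id
  t := id
  s_inj := fun _ _ h => h
  t_inj := fun _ _ h => h
  s_min := fun _ _ h => h
  t_max := fun _ _ h => h

/-- Isomorphism of iposets: an order-preserving and order-reflecting bijection
commuting with the interface maps (the interface arities must agree). -/
def Iso {n m n' m' : ℕ} (P : Iposet n m) (Q : Iposet n' m') : Prop :=
  n = n' ∧ m = m' ∧
  ∃ f : P.carrier ≃ Q.carrier,
    (∀ x y, P.lt x y ↔ Q.lt (f x) (f y)) ∧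
    (∀ (i : Fin n) (j : Fin n'), (i : ℕ) = (j : ℕ) → f (P.s i) = Q.s j) ∧
    (∀ (i : Fin m) (j : Fin m'), (i : ℕ) = (j : ℕ) → f (P.t i) = Q.t j)

/-- `Subsu P Q` : `P` is subsumed by `Q`, i.e. there is an interface-preserving
order-reflecting bijection from `P` to `Q`. -/
def Subsu {n m : ℕ} (P Q : Iposet n m) : Prop :=
  ∃ f : P.carrier ≃ Q.carrier,
    (∀ x y, Q.lt (f x) (f y) → P.lt x y) ∧
    (∀ i, f (P.s i) = Q.s i) ∧ (∀ i, f (P.t i) = Q.t i)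

/-- Isomorphism of the underlying posets, ignoring interfaces. -/
def PosetIso {n m n' m' : ℕ} (P : Iposet n m) (Q : Iposet n' m') : Prop :=
  ∃ f : P.carrier ≃ Q.carrier, ∀ x y, P.lt x y ↔ Q.lt (f x) (f y)

/-- An iposet is discrete if its order relation is empty. -/
def IsDiscrete {n m : ℕ} (P : Iposet n m) : Prop := ∀ x y, ¬ P.lt x y

/-- A starter is a discrete iposet whose target interface map is bijective. -/
def IsStarter {n m : ℕ} (P : Iposet n m) : Prop :=
  IsDiscrete P ∧ Function.Bijective P.t

/-- A terminator is a discrete iposet whose source interface map is bijective. -/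
def IsTerminator {n m : ℕ} (P : Iposet n m) : Prop :=
  IsDiscrete P ∧ Function.Bijective P.s

/-- A symmetry is a discrete iposet with both interface maps bijective. -/
def IsSymmetry {n m : ℕ} (P : Iposet n m) : Prop :=
  IsDiscrete P ∧ Function.Bijective P.s ∧ Function.Bijective P.t

/-- Interface consistency: for points lying in both interfaces, the numbering
of the source interface agrees with that of the target interface. -/
def InterfaceConsistent {n m : ℕ} (P : Iposet n m) : Prop :=
  ∀ (i j : Fin n) (i' j' : Fin m),
    P.s i = P.t i' → P.s j = P.t j' → ((i : ℕ) < (j : ℕ) ↔ (i' : ℕ) < (j' : ℕ))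

/-- An iposet is connected if its underlying poset is nonempty and any two
points are joined by a zigzag of order relations. -/
def Connected {n m : ℕ} (P : Iposet n m) : Prop :=
  Nonempty P.carrier ∧
    ∀ x y, Relation.ReflTransGen (fun a b => P.lt a b ∨ P.lt b a) x y

/-- The interval order condition on the underlying poset of an iposet. -/
def IsIntervalOrder {n m : ℕ} (P : Iposet n m) : Prop :=
  ∀ w x y z, P.lt w y → P.lt x z → P.lt w z ∨ P.lt x y

/-- The class of gluing-parallel iposets: generated (up to isomorphism) from
the empty iposet and the four singleton iposets by gluing and parallel
composition. -/
inductive IsGP : {n m : ℕ} → Iposet n m → Prop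
  | empty : IsGP ipoEmpty
  | s00 : IsGP ipo00
  | s01 : IsGP ipo01
  | s10 : IsGP ipo10
  | s11 : IsGP ipo11
  | glue {n m k : ℕ} {P : Iposet n m} {Q : Iposet m k} :
      IsGP P → IsGP Q → IsGP (P.glue Q)
  | par {n₁ m₁ n₂ m₂ : ℕ} {P : Iposet n₁ m₁} {Q : Iposet n₂ m₂} :
      IsGP P → IsGP Q → IsGP (P.par Q)
  | iso {n m n' m' : ℕ} {P : Iposet n m} {Q : Iposet n' m'} :
      IsGP P → Iso P Q → IsGP Q

/-- The ⊗-closure of the four singleton iposets (up to isomorphism):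
parallel compositions of finitely many singletons. -/
inductive InParSingles : {n m : ℕ} → Iposet n m → Prop
  | s00 : InParSingles ipo00
  | s01 : InParSingles ipo01
  | s10 : InParSingles ipo10
  | s11 : InParSingles ipo11
  | par {n₁ m₁ n₂ m₂ : ℕ} {P : Iposet n₁ m₁} {Q : Iposet n₂ m₂} :
      InParSingles P → InParSingles Q → InParSingles (P.par Q)
  | iso {n m n' m' : ℕ} {P : Iposet n m} {Q : Iposet n' m'} :
      InParSingles P → Iso P Q → InParSingles Q

/-- The induced subiposet of a poset (iposet with empty interfaces) on a
subset of its points. -/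
def restrict (P : Iposet 0 0) (A : Set P.carrier) : Iposet 0 0 where
  carrier := {x : P.carrier // x ∈ A}
  fin := by have := P.fin; exact inferInstance
  lt a b := P.lt a.val b.val
  irrefl a := P.irrefl a.val
  trans := fun a b c h1 h2 => P.trans _ _ _ h1 h2
  s := Fin.elim0
  t := Fin.elim0
  s_inj := by intro i; exact i.elim0
  t_inj := by intro i; exact i.elim0
  s_min := fun i => i.elim0
  t_max := fun i => i.elim0

lemma glue_t_inl_iff {n m k : ℕ} (P : Iposet n m) (Q : Iposet m k) (i : Fin k)
    (p : P.carrier) :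
    (P.glue Q).t i = .inl p ↔ ∃ j, Q.s j = Q.t i ∧ P.t j = p := by
  unfold glue
  dsimp only
  by_cases h : ∃ j, Q.s j = Q.t i
  · rw [dif_pos h]
    constructor
    · intro he
      exact ⟨h.choose, h.choose_spec, Sum.inl.inj he⟩
    · rintro ⟨j, hj1, hj2⟩
      have : h.choose = j := Q.s_inj (h.choose_spec.trans hj1.symm)
      rw [this, hj2]
  · rw [dif_neg h]
    constructor
    · intro he; exact absurd he (by simp)
    · rintro ⟨j, hj1, hj2⟩; exact absurd ⟨j, hj1⟩ h

lemma glue_t_inr_iff {n m k : ℕ} (P : Iposet n m) (Q : Iposet m k) (i : Fin k)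
    (q : Q.carrier) (hq : ¬ ∃ j, Q.s j = q) :
    (P.glue Q).t i = .inr ⟨q, hq⟩ ↔ Q.t i = q := by
  unfold glue
  dsimp only
  by_cases h : ∃ j, Q.s j = Q.t i
  · rw [dif_pos h]
    constructor
    · intro he; exact absurd he (by simp)
    · intro he; rw [he] at h; exact absurd h hq
  · rw [dif_neg h]
    constructor
    · intro he
      have := Sum.inr.inj he
      exact congrArg Subtype.val this
    · intro he
      exact congrArg Sum.inr (Subtype.ext he)

end Iposet

open Iposet in
/-- Gluing composition of iposets is associative up to isomorphism. -/
theorem glue_assoc {n m k l : ℕ} (P : Iposet n m) (Q : Iposet m k)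
    (R : Iposet k l) :
    Iso ((P.glue Q).glue R) (P.glue (Q.glue R)) := by
  classical
  refine ⟨rfl, rfl, ?_⟩
  refine ⟨{
    toFun := fun x => match x with
      | .inl (.inl p) => .inl p
      | .inl (.inr q) => .inr ⟨.inl q.val, by
          rintro ⟨j, hj⟩; exact q.2 ⟨j, Sum.inl.inj hj⟩⟩
      | .inr r => .inr ⟨.inr r, by rintro ⟨j, hj⟩; exact Sum.inl_ne_inr hj⟩
    invFun := fun x => match x with
      | .inl p => .inl (.inl p)
      | .inr ⟨.inl q, hq⟩ => .inl (.inr ⟨q, fun h => hq ⟨h.choose, by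
          show Sum.inl (Q.s h.choose) = Sum.inl q
          rw [h.choose_spec]⟩⟩)
      | .inr ⟨.inr r, _⟩ => .inr r
    left_inv := by rintro ((p | q) | r) <;> rfl
    right_inv := by rintro (p | ⟨(q | r), h⟩) <;> rfl }, ?_, ?_, ?_⟩
  · -- order iso
    rintro ((p | ⟨q, hq⟩) | ⟨r, hr⟩) ((p' | ⟨q', hq'⟩) | ⟨r', hr'⟩)
    · exact Iff.rfl
    · exact Iff.rfl
    · -- inl (inl p) vs inr r : the key case
      show ((¬ ∃ i, (P.glue Q).t i = .inl p) ∨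
          ∃ i, (P.glue Q).t i = .inl p ∧ R.lt (R.s i) r') ↔
        ((¬ ∃ i, P.t i = p) ∨
          ∃ i, P.t i = p ∧ (Q.glue R).lt ((Q.glue R).s i) (.inr ⟨r', hr'⟩))
      constructor
      · rintro (h | ⟨i, hi, hlt⟩)
        · by_cases hp : ∃ i, P.t i = p
          · obtain ⟨i0, hi0⟩ := hp
            refine Or.inr ⟨i0, hi0, Or.inl ?_⟩
            rintro ⟨j, hj⟩
            exact h ⟨j, (glue_t_inl_iff P Q j p).mpr ⟨i0, hj.symm, hi0⟩⟩
          · exact Or.inl hp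
        · obtain ⟨i0, hs, ht⟩ := (glue_t_inl_iff P Q i p).mp hi
          exact Or.inr ⟨i0, ht, Or.inr ⟨i, hs.symm, hlt⟩⟩
      · rintro (h | ⟨i, hi, (h2 | ⟨j, hj, hlt⟩)⟩)
        · refine Or.inl ?_
          rintro ⟨i, hti⟩
          obtain ⟨i0, _, ht⟩ := (glue_t_inl_iff P Q i p).mp hti
          exact h ⟨i0, ht⟩
        · refine Or.inl ?_
          rintro ⟨j, htj⟩
          obtain ⟨i0, hs, ht⟩ := (glue_t_inl_iff P Q j p).mp htj
          have : i0 = i := P.t_inj (ht.trans hi.symm)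
          exact h2 ⟨j, this ▸ hs.symm⟩
        · exact Or.inr ⟨j, (glue_t_inl_iff P Q j p).mpr ⟨i, hj.symm, hi⟩, hlt⟩
    · exact Iff.rfl
    · exact Iff.rfl
    · -- inl (inr q) vs inr r
      show ((¬ ∃ i, (P.glue Q).t i = .inr ⟨q, hq⟩) ∨
          ∃ i, (P.glue Q).t i = .inr ⟨q, hq⟩ ∧ R.lt (R.s i) r') ↔
        ((¬ ∃ i, Q.t i = q) ∨ ∃ i, Q.t i = q ∧ R.lt (R.s i) r')
      constructor
      · rintro (h | ⟨i, hi, hlt⟩)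
        · refine Or.inl ?_
          rintro ⟨i, hti⟩
          exact h ⟨i, (glue_t_inr_iff P Q i q hq).mpr hti⟩
        · exact Or.inr ⟨i, (glue_t_inr_iff P Q i q hq).mp hi, hlt⟩
      · rintro (h | ⟨i, hi, hlt⟩)
        · refine Or.inl ?_
          rintro ⟨i, hti⟩
          exact h ⟨i, (glue_t_inr_iff P Q i q hq).mp hti⟩
        · exact Or.inr ⟨i, (glue_t_inr_iff P Q i q hq).mpr hi, hlt⟩
    · exact Iff.rfl
    · exact Iff.rfl
    · exact Iff.rfl
  · -- sources
    intro i j hij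
    have : i = j := Fin.ext hij
    subst this
    rfl
  · -- targets
    intro i j hij
    have : i = j := Fin.ext hij
    subst this
    by_cases h : ∃ j, R.s j = R.t i
    · have hL : ((P.glue Q).glue R).t i = .inl ((P.glue Q).t h.choose) :=
        (glue_t_inl_iff (P.glue Q) R i _).mpr ⟨h.choose, h.choose_spec, rfl⟩
      have hB : (Q.glue R).t i = .inl (Q.t h.choose) :=
        (glue_t_inl_iff Q R i _).mpr ⟨h.choose, h.choose_spec, rfl⟩
      by_cases h2 : ∃ j, Q.s j = Q.t h.choose
      · have hL2 : (P.glue Q).t h.choose = .inl (P.t h2.choose) :=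
          (glue_t_inl_iff P Q _ _).mpr ⟨h2.choose, h2.choose_spec, rfl⟩
        have hR : (P.glue (Q.glue R)).t i = .inl (P.t h2.choose) := by
          refine (glue_t_inl_iff P (Q.glue R) i _).mpr ⟨h2.choose, ?_, rfl⟩
          show Sum.inl (Q.s h2.choose) = (Q.glue R).t i
          rw [hB, h2.choose_spec]
        rw [hL, hL2, hR]
        rfl
      · have hL2 : (P.glue Q).t h.choose = .inr ⟨Q.t h.choose, h2⟩ :=
          (glue_t_inr_iff P Q _ _ h2).mpr rfl
        have hnot : ¬ ∃ j, (Q.glue R).s j = (Q.glue R).t i := by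
          rintro ⟨j, hj⟩
          rw [hB] at hj
          exact h2 ⟨j, Sum.inl.inj hj⟩
        have hR : (P.glue (Q.glue R)).t i = .inr ⟨(Q.glue R).t i, hnot⟩ :=
          (glue_t_inr_iff P (Q.glue R) i _ hnot).mpr rfl
        rw [hL, hL2, hR]
        exact congrArg Sum.inr (Subtype.ext hB.symm)
    · have hL : ((P.glue Q).glue R).t i = .inr ⟨R.t i, h⟩ :=
        (glue_t_inr_iff (P.glue Q) R i _ h).mpr rfl
      have hB : (Q.glue R).t i = .inr ⟨R.t i, h⟩ :=
        (glue_t_inr_iff Q R i _ h).mpr rfl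
      have hnot : ¬ ∃ j, (Q.glue R).s j = (Q.glue R).t i := by
        rintro ⟨j, hj⟩
        rw [hB] at hj
        exact Sum.inl_ne_inr hj
      have hR : (P.glue (Q.glue R)).t i = .inr ⟨(Q.glue R).t i, hnot⟩ :=
        (glue_t_inr_iff P (Q.glue R) i _ hnot).mpr rfl
      rw [hL, hR]
      exact congrArg Sum.inr (Subtype.ext hB.symm)
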